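/- There exists a universal constant C > 0 such that for all N, L ∈ ℕ and any numbers θ_{m,l} ∈ {0,1} for 0 ≤ m ≤ N²L − 1 and 0 ≤ l ≤ L − 1, there exists a ReLU feed-forward neural network φ : ℝ² → ℝ of width at most C·N and depth at most C·L² such that φ(m, l) = Σ_{j=0}^{l} θ_{m,j} for all integers 0 ≤ m ≤ N²L − 1 and 0 ≤ l ≤ L − 1, and such that φ admits a representation all of whose parameters are bounded in absolute value by C·N²L. -/

import Mathlib

/-- Evaluation of a fully connected feed-forward ReLU network with input dimension `d`,
hidden width `W`, input affine map `(A₀, b₀)`, hidden affine maps `hidden`, and output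
affine map `(Aout, bout)`; `ReLU(t) = max t 0` is applied componentwise after each
affine map except the last. -/
noncomputable def netEval {d W : ℕ} (A₀ : Matrix (Fin W) (Fin d) ℝ) (b₀ : Fin W → ℝ)
    (hidden : List (Matrix (Fin W) (Fin W) ℝ × (Fin W → ℝ)))
    (Aout : Fin W → ℝ) (bout : ℝ) (x : Fin d → ℝ) : ℝ :=
  (∑ i, Aout i *
    (hidden.foldl (fun v p => fun i => max ((p.1.mulVec v + p.2) i) 0)
      (fun i => max ((A₀.mulVec x + b₀) i) 0)) i) + bout

/-- `IsReluNet f Wd Dp B`: the function `f : ℝ^d → ℝ` is realized by a fully connected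
feed-forward ReLU network of width at most `Wd`, depth (number of hidden layers) at
most `Dp`, all of whose parameters (matrix entries and biases) are bounded in absolute
value by `B`. -/
def IsReluNet {d : ℕ} (f : (Fin d → ℝ) → ℝ) (Wd Dp B : ℝ) : Prop :=
  ∃ (W : ℕ) (A₀ : Matrix (Fin W) (Fin d) ℝ) (b₀ : Fin W → ℝ)
    (hidden : List (Matrix (Fin W) (Fin W) ℝ × (Fin W → ℝ)))
    (Aout : Fin W → ℝ) (bout : ℝ),
    (W : ℝ) ≤ Wd ∧ ((hidden.length : ℝ) + 1) ≤ Dp ∧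
    (∀ i j, |A₀ i j| ≤ B) ∧ (∀ i, |b₀ i| ≤ B) ∧
    (∀ p ∈ hidden, (∀ i j, |p.1 i j| ≤ B) ∧ (∀ i, |p.2 i| ≤ B)) ∧
    (∀ i, |Aout i| ≤ B) ∧ |bout| ≤ B ∧
    ∀ x, f x = netEval A₀ b₀ hidden Aout bout x

open Finset Matrix

namespace BitX



def Wd (N : ℕ) : ℕ := 4*N+8

def chM (N : ℕ) : Fin (Wd N) := ⟨0, by unfold Wd; omega⟩
def chL (N : ℕ) : Fin (Wd N) := ⟨1, by unfold Wd; omega⟩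
def chAcc (N : ℕ) : Fin (Wd N) := ⟨2, by unfold Wd; omega⟩
def chF (N : ℕ) : Fin (Wd N) := ⟨3, by unfold Wd; omega⟩
def chE (N : ℕ) (i : Fin N) : Fin (Wd N) := ⟨4+i.val, by have := i.2; unfold Wd; omega⟩
def chH1 (N : ℕ) (i : Fin (N+1)) : Fin (Wd N) := ⟨4+N+i.val, by have := i.2; unfold Wd; omega⟩
def chH2 (N : ℕ) (i : Fin (N+1)) : Fin (Wd N) := ⟨5+2*N+i.val, by have := i.2; unfold Wd; omega⟩
def chQ1 (N : ℕ) : Fin (Wd N) := ⟨6+3*N, by unfold Wd; omega⟩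
def chQ2 (N : ℕ) : Fin (Wd N) := ⟨7+3*N, by unfold Wd; omega⟩
def chA (N : ℕ) (i : Fin N) : Fin (Wd N) := ⟨8+3*N+i.val, by have := i.2; unfold Wd; omega⟩

lemma ch_elim (N : ℕ) (P : Fin (Wd N) → Prop)
    (h1 : P (chM N)) (h2 : P (chL N)) (h3 : P (chAcc N)) (h4 : P (chF N))
    (h5 : ∀ i, P (chE N i)) (h6 : ∀ i, P (chH1 N i)) (h7 : ∀ i, P (chH2 N i))
    (h8 : P (chQ1 N)) (h9 : P (chQ2 N)) (h10 : ∀ i, P (chA N i)) : ∀ j, P j := by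
  intro j
  have hj := j.2
  unfold Wd at hj
  rcases Nat.lt_or_ge j.val 1 with h | h
  · have : j = chM N := Fin.ext (by simp only [chM, Fin.val_mk]; omega)
    rw [this]; exact h1
  rcases Nat.lt_or_ge j.val 2 with h' | h'
  · have : j = chL N := Fin.ext (by simp only [chL, Fin.val_mk]; omega)
    rw [this]; exact h2
  rcases Nat.lt_or_ge j.val 3 with h'' | h''
  · have : j = chAcc N := Fin.ext (by simp only [chAcc, Fin.val_mk]; omega)
    rw [this]; exact h3
  rcases Nat.lt_or_ge j.val 4 with h3' | h3'
  · have : j = chF N := Fin.ext (by simp only [chF, Fin.val_mk]; omega)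
    rw [this]; exact h4
  rcases Nat.lt_or_ge j.val (4+N) with h4' | h4'
  · have : j = chE N ⟨j.val - 4, by omega⟩ := Fin.ext (by simp only [chE, Fin.val_mk]; omega)
    rw [this]; exact h5 _
  rcases Nat.lt_or_ge j.val (5+2*N) with h5' | h5'
  · have : j = chH1 N ⟨j.val - (4+N), by omega⟩ :=
      Fin.ext (by simp only [chH1, Fin.val_mk]; omega)
    rw [this]; exact h6 _
  rcases Nat.lt_or_ge j.val (6+3*N) with h6' | h6'
  · have : j = chH2 N ⟨j.val - (5+2*N), by omega⟩ :=
      Fin.ext (by simp only [chH2, Fin.val_mk]; omega)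
    rw [this]; exact h7 _
  rcases Nat.lt_or_ge j.val (7+3*N) with h7' | h7'
  · have : j = chQ1 N := Fin.ext (by simp only [chQ1, Fin.val_mk]; omega)
    rw [this]; exact h8
  rcases Nat.lt_or_ge j.val (8+3*N) with h8' | h8'
  · have : j = chQ2 N := Fin.ext (by simp only [chQ2, Fin.val_mk]; omega)
    rw [this]; exact h9
  have : j = chA N ⟨j.val - (8+3*N), by omega⟩ :=
    Fin.ext (by simp only [chA, Fin.val_mk]; omega)
  rw [this]; exact h10 _

def chFun {α : Type*} (N : ℕ) (am al aacc aF : α) (aE : Fin N → α) (aH1 aH2 : Fin (N+1) → α)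
    (aq1 aq2 : α) (aa : Fin N → α) : Fin (Wd N) → α := fun j =>
  if _ : j.val < 1 then am
  else if _ : j.val < 2 then al
  else if _ : j.val < 3 then aacc
  else if _ : j.val < 4 then aF
  else if h : j.val < 4+N then aE ⟨j.val-4, by omega⟩
  else if h : j.val < 5+2*N then aH1 ⟨j.val-(4+N), by omega⟩
  else if h : j.val < 6+3*N then aH2 ⟨j.val-(5+2*N), by omega⟩
  else if _ : j.val < 7+3*N then aq1
  else if _ : j.val < 8+3*N then aq2
  else aa ⟨j.val-(8+3*N), by have := j.2; unfold Wd at this; omega⟩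

variable {α β : Type*}

section chFunLemmas
variable (N : ℕ) (am al aacc aF : α) (aE : Fin N → α) (aH1 aH2 : Fin (N+1) → α)
    (aq1 aq2 : α) (aa : Fin N → α)

@[simp] lemma chFun_chM : chFun N am al aacc aF aE aH1 aH2 aq1 aq2 aa (chM N) = am := by
  unfold chFun chM
  simp only [Fin.val_mk]
  rw [dif_pos (by omega)]

@[simp] lemma chFun_chL : chFun N am al aacc aF aE aH1 aH2 aq1 aq2 aa (chL N) = al := by
  unfold chFun chL
  simp only [Fin.val_mk]
  rw [dif_neg (by omega), dif_pos (by omega)]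

@[simp] lemma chFun_chAcc : chFun N am al aacc aF aE aH1 aH2 aq1 aq2 aa (chAcc N) = aacc := by
  unfold chFun chAcc
  simp only [Fin.val_mk]
  rw [dif_neg (by omega), dif_neg (by omega), dif_pos (by omega)]

@[simp] lemma chFun_chF : chFun N am al aacc aF aE aH1 aH2 aq1 aq2 aa (chF N) = aF := by
  unfold chFun chF
  simp only [Fin.val_mk]
  rw [dif_neg (by omega), dif_neg (by omega), dif_neg (by omega), dif_pos (by omega)]

@[simp] lemma chFun_chE (i : Fin N) :
    chFun N am al aacc aF aE aH1 aH2 aq1 aq2 aa (chE N i) = aE i := by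
  have hi := i.2
  unfold chFun chE
  simp only [Fin.val_mk]
  rw [dif_neg (by omega), dif_neg (by omega), dif_neg (by omega), dif_neg (by omega),
    dif_pos (by omega)]
  congr 1
  exact Fin.ext (by simp)

@[simp] lemma chFun_chH1 (i : Fin (N+1)) :
    chFun N am al aacc aF aE aH1 aH2 aq1 aq2 aa (chH1 N i) = aH1 i := by
  have hi := i.2
  unfold chFun chH1
  simp only [Fin.val_mk]
  rw [dif_neg (by omega), dif_neg (by omega), dif_neg (by omega), dif_neg (by omega),
    dif_neg (by omega), dif_pos (by omega)]
  congr 1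
  exact Fin.ext (by simp)

@[simp] lemma chFun_chH2 (i : Fin (N+1)) :
    chFun N am al aacc aF aE aH1 aH2 aq1 aq2 aa (chH2 N i) = aH2 i := by
  have hi := i.2
  unfold chFun chH2
  simp only [Fin.val_mk]
  rw [dif_neg (by omega), dif_neg (by omega), dif_neg (by omega), dif_neg (by omega),
    dif_neg (by omega), dif_neg (by omega), dif_pos (by omega)]
  congr 1
  exact Fin.ext (by simp)

@[simp] lemma chFun_chQ1 : chFun N am al aacc aF aE aH1 aH2 aq1 aq2 aa (chQ1 N) = aq1 := by
  unfold chFun chQ1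
  simp only [Fin.val_mk]
  rw [dif_neg (by omega), dif_neg (by omega), dif_neg (by omega), dif_neg (by omega),
    dif_neg (by omega), dif_neg (by omega), dif_neg (by omega), dif_pos (by omega)]

@[simp] lemma chFun_chQ2 : chFun N am al aacc aF aE aH1 aH2 aq1 aq2 aa (chQ2 N) = aq2 := by
  unfold chFun chQ2
  simp only [Fin.val_mk]
  rw [dif_neg (by omega), dif_neg (by omega), dif_neg (by omega), dif_neg (by omega),
    dif_neg (by omega), dif_neg (by omega), dif_neg (by omega), dif_neg (by omega),
    dif_pos (by omega)]

@[simp] lemma chFun_chA (i : Fin N) :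
    chFun N am al aacc aF aE aH1 aH2 aq1 aq2 aa (chA N i) = aa i := by
  have hi := i.2
  unfold chFun chA
  simp only [Fin.val_mk]
  rw [dif_neg (by omega), dif_neg (by omega), dif_neg (by omega), dif_neg (by omega),
    dif_neg (by omega), dif_neg (by omega), dif_neg (by omega), dif_neg (by omega),
    dif_neg (by omega)]
  congr 1
  exact Fin.ext (by simp)

lemma chFun_comp (f : α → β) :
    (fun j => f (chFun N am al aacc aF aE aH1 aH2 aq1 aq2 aa j)) =
      chFun N (f am) (f al) (f aacc) (f aF) (fun i => f (aE i)) (fun i => f (aH1 i))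
        (fun i => f (aH2 i)) (f aq1) (f aq2) (fun i => f (aa i)) := by
  funext j
  refine ch_elim N (fun j => f (chFun N am al aacc aF aE aH1 aH2 aq1 aq2 aa j) =
    chFun N (f am) (f al) (f aacc) (f aF) (fun i => f (aE i)) (fun i => f (aH1 i))
      (fun i => f (aH2 i)) (f aq1) (f aq2) (fun i => f (aa i)) j)
    ?_ ?_ ?_ ?_ ?_ ?_ ?_ ?_ ?_ ?_ j <;> intros <;> simp

lemma chFun_congr {bm bl bacc bF : α} {bE : Fin N → α} {bH1 bH2 : Fin (N+1) → α}
    {bq1 bq2 : α} {ba : Fin N → α}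
    (h1 : am = bm) (h2 : al = bl) (h3 : aacc = bacc) (h4 : aF = bF)
    (h5 : ∀ i, aE i = bE i) (h6 : ∀ i, aH1 i = bH1 i) (h7 : ∀ i, aH2 i = bH2 i)
    (h8 : aq1 = bq1) (h9 : aq2 = bq2) (h10 : ∀ i, aa i = ba i) :
    chFun N am al aacc aF aE aH1 aH2 aq1 aq2 aa =
      chFun N bm bl bacc bF bE bH1 bH2 bq1 bq2 ba := by
  funext j
  refine ch_elim N (fun j => chFun N am al aacc aF aE aH1 aH2 aq1 aq2 aa j =
      chFun N bm bl bacc bF bE bH1 bH2 bq1 bq2 ba j) ?_ ?_ ?_ ?_ ?_ ?_ ?_ ?_ ?_ ?_ j <;>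
    intros <;> simp [*]

lemma chFun_forall (P : α → Prop)
    (h1 : P am) (h2 : P al) (h3 : P aacc) (h4 : P aF)
    (h5 : ∀ i, P (aE i)) (h6 : ∀ i, P (aH1 i)) (h7 : ∀ i, P (aH2 i))
    (h8 : P aq1) (h9 : P aq2) (h10 : ∀ i, P (aa i)) :
    ∀ j, P (chFun N am al aacc aF aE aH1 aH2 aq1 aq2 aa j) := by
  refine ch_elim N (fun j => P (chFun N am al aacc aF aE aH1 aH2 aq1 aq2 aa j))
    ?_ ?_ ?_ ?_ ?_ ?_ ?_ ?_ ?_ ?_ <;> intros <;> simp [*]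

end chFunLemmas

def rowOn {N : ℕ} {K : ℕ} (emb : Fin K → Fin (Wd N)) (coef : Fin K → ℝ) : Fin (Wd N) → ℝ :=
  fun j => ∑ i, if j = emb i then coef i else 0

lemma dot_rowOn {N K : ℕ} (emb : Fin K → Fin (Wd N)) (coef : Fin K → ℝ) (v : Fin (Wd N) → ℝ) :
    dotProduct (rowOn emb coef) v = ∑ i, coef i * v (emb i) := by
  unfold dotProduct rowOn
  simp only [Finset.sum_mul, ite_mul, zero_mul]
  rw [Finset.sum_comm]
  congr 1
  funext i
  rw [Finset.sum_ite_eq' univ (emb i) (fun j => coef i * v j)]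
  simp

lemma abs_rowOn_le {N K : ℕ} (emb : Fin K → Fin (Wd N)) (coef : Fin K → ℝ) (B : ℝ)
    (h : ∑ i, |coef i| ≤ B) (j : Fin (Wd N)) : |rowOn emb coef j| ≤ B := by
  refine le_trans (le_trans (Finset.abs_sum_le_sum_abs _ _) ?_) h
  apply Finset.sum_le_sum
  intro i _
  split_ifs <;> simp

abbrev Row (N : ℕ) : Type := (Fin (Wd N) → ℝ) × ℝ

def rZ {N : ℕ} : Row N := (0, 0)

def r1 {N : ℕ} (c : Fin (Wd N)) (a b : ℝ) : Row N := (rowOn (fun _ : Fin 1 => c) (fun _ => a), b)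

noncomputable def act {N : ℕ} (p : Row N) (v : Fin (Wd N) → ℝ) : ℝ :=
  max (dotProduct p.1 v + p.2) 0

def mkLayer {N : ℕ} (r : Fin (Wd N) → Row N) :
    Matrix (Fin (Wd N)) (Fin (Wd N)) ℝ × (Fin (Wd N) → ℝ) :=
  (Matrix.of fun i j => (r i).1 j, fun i => (r i).2)

noncomputable def stepL {N : ℕ} (v : Fin (Wd N) → ℝ)
    (p : Matrix (Fin (Wd N)) (Fin (Wd N)) ℝ × (Fin (Wd N) → ℝ)) : Fin (Wd N) → ℝ :=
  fun i => max ((p.1.mulVec v + p.2) i) 0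

lemma stepL_mkLayer {N : ℕ} (r : Fin (Wd N) → Row N) (v : Fin (Wd N) → ℝ) :
    stepL v (mkLayer r) = fun j => act (r j) v := rfl

@[simp] lemma act_rZ {N : ℕ} (v : Fin (Wd N) → ℝ) : act (rZ : Row N) v = 0 := by
  simp [act, rZ]

@[simp] lemma act_r1 {N : ℕ} (c : Fin (Wd N)) (a b : ℝ) (v : Fin (Wd N) → ℝ) :
    act (r1 c a b) v = max (a * v c + b) 0 := by
  simp [act, r1, dot_rowOn]


noncomputable def ind (P : Prop) [Decidable P] : ℝ := if P then 1 else 0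

lemma ind_nonneg (P : Prop) [Decidable P] : 0 ≤ ind P := by unfold ind; split_ifs <;> norm_num

lemma ind_le_one (P : Prop) [Decidable P] : ind P ≤ 1 := by unfold ind; split_ifs <;> norm_num

lemma ind_zero_one (P : Prop) [Decidable P] : ind P = 0 ∨ ind P = 1 := by
  unfold ind; split_ifs <;> simp

lemma maxsub (r k : ℕ) : max ((r:ℝ) - k) 0 = if k ≤ r then (r:ℝ) - k else 0 := by
  split_ifs with h
  · exact max_eq_left (by have : (k:ℝ) ≤ r := Nat.cast_le.2 h; linarith)
  · push_neg at h
    refine max_eq_right ?_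
    have hk : (r:ℝ) + 1 ≤ k := by exact_mod_cast Nat.succ_le_of_lt h
    linarith

lemma maxsub1 (r k : ℕ) : max ((r:ℝ) - k + 1) 0 = if k ≤ r + 1 then (r:ℝ) - k + 1 else 0 := by
  have := maxsub (r+1) k
  push_cast at this
  rw [show (r:ℝ) - k + 1 = (r:ℝ) + 1 - k by ring, this]

lemma ind_step (K m : ℕ) : max ((m:ℝ) - K + 1) 0 - max ((m:ℝ) - K) 0 = ind (K ≤ m) := by
  rw [maxsub, maxsub1]
  unfold ind
  split_ifs with h1 h2
  · ring
  · have hk : K = m + 1 := by omega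
    subst hk
    push_cast
    ring
  · omega
  · ring

lemma div_eq_iff'' (m N q : ℕ) (h : 0 < N) : m / N = q ↔ q*N ≤ m ∧ m < (q+1)*N := by
  have h1 : (m/N)*N + m%N = m := by rw [Nat.mul_comm]; exact Nat.div_add_mod m N
  have h2 := Nat.mod_lt m h
  constructor
  · rintro rfl
    have h3 : (m/N+1)*N = (m/N)*N + N := by ring
    omega
  · rintro ⟨ha, hb⟩
    have h3 : m / N < q + 1 := by
      by_contra hc
      push_neg at hc
      have h5 : (q+1) * N ≤ (m/N) * N := Nat.mul_le_mul_right _ hc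
      omega
    have h4 : q ≤ m / N := by rw [Nat.le_div_iff_mul_le h]; exact ha
    omega

lemma ind_interval (a b m : ℕ) (hab : a ≤ b) :
    ind (a ≤ m) - ind (b ≤ m) = ind (a ≤ m ∧ m < b) := by
  unfold ind
  split_ifs <;> first | ring1 | omega

lemma ecombo_eq (N t' i m : ℕ) (hN : 0 < N) :
    ind (t'*N*N + i*N ≤ m) - ind (t'*N*N + (i+1)*N ≤ m) = ind (m / N = t'*N + i) := by
  have key : (t'*N*N + i*N ≤ m ∧ m < t'*N*N + (i+1)*N) ↔ m / N = t'*N + i := by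
    rw [div_eq_iff'' m N (t'*N+i) hN]
    constructor
    · rintro ⟨h1, h2⟩
      exact ⟨by calc (t'*N+i)*N = t'*N*N + i*N := by ring
        _ ≤ m := h1, by calc m < t'*N*N + (i+1)*N := h2
        _ = (t'*N+i+1)*N := by ring⟩
    · rintro ⟨h1, h2⟩
      exact ⟨by calc t'*N*N + i*N = (t'*N+i)*N := by ring
        _ ≤ m := h1, by calc m < (t'*N+i+1)*N := h2
        _ = t'*N*N + (i+1)*N := by ring⟩
  rw [ind_interval _ _ _ (by nlinarith)]
  unfold ind
  rw [if_congr key rfl rfl]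

lemma and3 (e k t : ℝ) (he : e = 0 ∨ e = 1) (hk : k = 0 ∨ k = 1) (ht : t = 0 ∨ t = 1) :
    max (t + (e + k + -2)) 0 = e * (k * t) := by
  rcases he with he | he <;> rcases hk with hk | hk <;> rcases ht with ht | ht <;>
    subst he <;> subst hk <;> subst ht <;> norm_num

lemma sum_range_add' {M : Type*} [AddCommMonoid M] (f : ℕ → M) (a b : ℕ) :
    ∑ k ∈ range (a+b), f k = (∑ k ∈ range a, f k) + ∑ i ∈ range b, f (a+i) := by
  induction b with
  | zero => simp
  | succ b ih =>
    rw [show a + (b+1) = (a+b)+1 by omega, Finset.sum_range_succ, ih, Finset.sum_range_succ]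
    simp [add_assoc]

lemma count_div (m N K : ℕ) (hN : 0 < N) (hm : m < K*N) :
    ∑ k ∈ range K, ind ((k+1)*N ≤ m) = ((m/N : ℕ) : ℝ) := by
  unfold ind
  rw [Finset.sum_boole]
  congr 1
  have hdiv : m / N < K := by rwa [Nat.div_lt_iff_lt_mul hN]
  have : Finset.filter (fun k => (k+1)*N ≤ m) (range K) = range (m/N) := by
    ext k
    simp only [Finset.mem_filter, Finset.mem_range]
    constructor
    · rintro ⟨_, hk⟩
      have : k + 1 ≤ m / N := by rw [Nat.le_div_iff_mul_le hN]; exact hk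
      omega
    · intro hk
      refine ⟨by omega, ?_⟩
      have : k + 1 ≤ m / N := by omega
      rw [Nat.le_div_iff_mul_le hN] at this
      exact this
  rw [this, Finset.card_range]


lemma mod_cast_sub (m N : ℕ) : (m:ℝ) - N * ((m/N : ℕ):ℝ) = ((m % N : ℕ) : ℝ) := by
  have h := Nat.div_add_mod m N
  have : ((N * (m/N) + m % N : ℕ) : ℝ) = (m:ℝ) := by rw [h]
  push_cast at this
  linarith

lemma hat0 (r : ℕ) : max (1 - max ((r:ℝ) - 0) 0 + max ((r:ℝ) - 1) 0) 0 = ind (r = 0) := by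
  unfold ind
  rcases Nat.eq_zero_or_pos r with h | h
  · subst h; norm_num
  · rw [if_neg (by omega)]
    have h1 : max ((r:ℝ) - 0) 0 = (r:ℝ) := by
      rw [max_eq_left (by have : (0:ℝ) ≤ r := Nat.cast_nonneg r; linarith)]; ring
    have h2 : max ((r:ℝ) - 1) 0 = (r:ℝ) - 1 := by
      rw [max_eq_left]
      have : (1:ℝ) ≤ r := by exact_mod_cast h
      linarith
    rw [h1, h2]
    norm_num

lemma hati (r i : ℕ) (hi : 1 ≤ i) :
    max (max ((r:ℝ) - (i-1 : ℕ)) 0 - 2 * max ((r:ℝ) - i) 0 + max ((r:ℝ) - (i+1 : ℕ)) 0) 0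
      = ind (r = i) := by
  unfold ind
  rcases Nat.lt_or_ge r i with h | h
  · rw [if_neg (by omega)]
    rcases Nat.lt_or_ge r (i-1) with h' | h'
    · have e1 : max ((r:ℝ) - (i-1 : ℕ)) 0 = 0 := by
        rw [max_eq_right]
        have : (r:ℝ) + 1 ≤ ((i-1 : ℕ):ℝ) := by exact_mod_cast h'
        linarith
      have e2 : max ((r:ℝ) - i) 0 = 0 := by
        rw [max_eq_right]
        have : (r:ℝ) ≤ (i:ℝ) := by exact_mod_cast Nat.le_of_lt h
        linarith
      have e3 : max ((r:ℝ) - (i+1:ℕ)) 0 = 0 := by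
        rw [max_eq_right]
        have : (r:ℝ) ≤ (i:ℝ) := by exact_mod_cast Nat.le_of_lt h
        push_cast
        linarith
      rw [e1, e2, e3]; norm_num
    · -- r = i - 1
      have hr : r = i - 1 := by omega
      have e1 : max ((r:ℝ) - (i-1 : ℕ)) 0 = 0 := by
        rw [hr, sub_self, max_self]
      have e2 : max ((r:ℝ) - i) 0 = 0 := by
        rw [max_eq_right]
        have : (r:ℝ) ≤ (i:ℝ) := by exact_mod_cast Nat.le_of_lt h
        linarith
      have e3 : max ((r:ℝ) - (i+1:ℕ)) 0 = 0 := by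
        rw [max_eq_right]
        have : (r:ℝ) ≤ (i:ℝ) := by exact_mod_cast Nat.le_of_lt h
        push_cast
        linarith
      rw [e1, e2, e3]; norm_num
  · have c1 : ((i-1:ℕ):ℝ) = (i:ℝ) - 1 := by
      have : ((i-1:ℕ):ℝ) + 1 = (i:ℝ) := by exact_mod_cast (by omega : (i-1) + 1 = i)
      linarith
    have hri : (i:ℝ) ≤ (r:ℝ) := by exact_mod_cast h
    have e1 : max ((r:ℝ) - (i-1 : ℕ)) 0 = (r:ℝ) - i + 1 := by
      rw [max_eq_left (by rw [c1]; linarith), c1]; ring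
    have e2 : max ((r:ℝ) - i) 0 = (r:ℝ) - i := max_eq_left (by linarith)
    rcases Nat.eq_or_lt_of_le h with h' | h'
    · have hri' : (r:ℝ) = (i:ℝ) := by exact_mod_cast h'.symm
      have e3 : max ((r:ℝ) - (i+1:ℕ)) 0 = 0 := by
        rw [max_eq_right]
        push_cast
        linarith
      rw [if_pos (by omega), e1, e2, e3]
      rw [hri']
      norm_num
    · have hri' : (i:ℝ) + 1 ≤ (r:ℝ) := by exact_mod_cast h'
      have e3 : max ((r:ℝ) - (i+1:ℕ)) 0 = (r:ℝ) - i - 1 := by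
        rw [max_eq_left (by push_cast; linarith)]
        push_cast
        ring
      rw [if_neg (by omega), e1, e2, e3]
      rw [show (r:ℝ) - ↑i + 1 - 2 * ((r:ℝ) - ↑i) + ((r:ℝ) - ↑i - 1) = 0 from by ring]
      simp


lemma onehot_sum {N : ℕ} (r : ℕ) (hr : r < N) (c : Fin N → ℝ) :
    ∑ i : Fin N, c i * ind (r = i.val) = c ⟨r, hr⟩ := by
  have : ∀ i : Fin N, c i * ind (r = i.val) = if (⟨r, hr⟩ : Fin N) = i then c i else 0 := by
    intro i
    unfold ind
    by_cases h : r = i.val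
    · rw [if_pos h, if_pos (Fin.ext h), mul_one]
    · rw [if_neg h, if_neg (fun hc => h (by rw [← hc])), mul_zero]
  rw [Finset.sum_congr rfl (fun i _ => this i), Finset.sum_ite_eq univ (⟨r, hr⟩ : Fin N) c]
  simp

lemma stage_total {N : ℕ} (hN : 0 < N) (m j l t' : ℕ) (θ : ℕ → ℕ → ℝ) :
    ∑ i : Fin N, ind (m/N = t'*N + i.val) * (ind (j ≤ l) * θ (m%N + N*i.val + N*N*t') j)
      = ind (m/N/N = t') * (ind (j ≤ l) * θ m j) := by
  have hmod := Nat.mod_lt (m/N) hN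
  have hsplit : N * (m/N/N) + (m/N) % N = m/N := Nat.div_add_mod (m/N) N
  have hm : N * (m/N) + m % N = m := Nat.div_add_mod m N
  by_cases ht : m/N/N = t'
  · have hkey : ∀ i : Fin N, (m/N = t'*N + i.val) ↔ i = (⟨(m/N) % N, hmod⟩ : Fin N) := by
      intro i
      rw [← ht]
      constructor
      · intro h
        have : t'*N + ((m/N)%N) = t'*N + i.val := by
          rw [← ht] at *
          calc (m/N/N)*N + ((m/N)%N) = N * (m/N/N) + (m/N)%N := by ring
            _ = m/N := hsplit
            _ = (m/N/N)*N + i.val := by rw [ht] at h ⊢; exact h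
        exact Fin.ext (by simp only [Fin.val_mk] at *; omega)
      · intro h
        subst h
        rw [ht]
        simp only [Fin.val_mk]
        calc m/N = N * (m/N/N) + (m/N)%N := hsplit.symm
          _ = t'*N + (m/N)%N := by rw [ht]; ring
    have : ∀ i : Fin N, ind (m/N = t'*N + i.val) * (ind (j ≤ l) * θ (m%N + N*i.val + N*N*t') j)
        = if (⟨(m/N) % N, hmod⟩ : Fin N) = i then
            (ind (j ≤ l) * θ (m%N + N*i.val + N*N*t') j) else 0 := by
      intro i
      by_cases h : m/N = t'*N + i.val
      · rw [show ind (m/N = t'*N + i.val) = 1 from by unfold ind; rw [if_pos h],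
          if_pos (((hkey i).1 h).symm), one_mul]
      · have h2 : ¬((⟨(m/N) % N, hmod⟩ : Fin N) = i) := fun hc => h ((hkey i).2 hc.symm)
        rw [show ind (m/N = t'*N + i.val) = 0 from by unfold ind; rw [if_neg h],
          if_neg h2, zero_mul]
    rw [Finset.sum_congr rfl (fun i _ => this i), Finset.sum_ite_eq univ _ _]
    simp only [Finset.mem_univ, if_pos, Fin.val_mk]
    have harg : m%N + N*((m/N)%N) + N*N*t' = m := by
      rw [← ht]
      calc m%N + N*((m/N)%N) + N*N*(m/N/N)
          = N * (N * (m/N/N) + (m/N) % N) + m % N := by ring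
        _ = N * (m/N) + m % N := by rw [hsplit]
        _ = m := hm
    rw [harg, ht]
    unfold ind
    rw [if_pos rfl, one_mul]
  · have : ∀ i : Fin N, ind (m/N = t'*N + i.val) = 0 := by
      intro i
      unfold ind
      rw [if_neg]
      intro h
      apply ht
      have : (t'*N + i.val) / N = t' := by
        rw [Nat.add_comm, Nat.mul_comm]
        rw [Nat.add_mul_div_left _ _ hN]
        rw [Nat.div_eq_of_lt i.2]
        omega
      rw [h, this]
    rw [Finset.sum_congr rfl (fun i _ => by rw [this i, zero_mul])]
    unfold ind
    rw [if_neg ht]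
    simp

lemma sum_range_add'' {M : Type*} [AddCommMonoid M] (f : ℕ → M) (a b : ℕ) :
    ∑ k ∈ range (a+b), f k = (∑ k ∈ range a, f k) + ∑ i ∈ range b, f (a+i) := by
  induction b with
  | zero => simp
  | succ b ih =>
    rw [show a + (b+1) = (a+b)+1 by omega, Finset.sum_range_succ, ih, Finset.sum_range_succ]
    simp [add_assoc]

lemma sum_range_mul {M : Type*} [AddCommMonoid M] (f : ℕ → M) (a b : ℕ) :
    ∑ k ∈ range (a*b), f k = ∑ j ∈ range a, ∑ t ∈ range b, f (j*b+t) := by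
  induction a with
  | zero => simp
  | succ a ih =>
    rw [show (a+1)*b = a*b + b by ring, sum_range_add'', ih, Finset.sum_range_succ]

lemma divmod_reindex (L : ℕ) (hL : 0 < L) (g : ℕ → ℕ → ℝ) :
    ∑ k ∈ range (L*L), g (k/L) (k%L) = ∑ j ∈ range L, ∑ t' ∈ range L, g j t' := by
  rw [sum_range_mul]
  refine Finset.sum_congr rfl (fun j _ => Finset.sum_congr rfl (fun t ht => ?_))
  rw [Finset.mem_range] at ht
  have h1 : (j*L+t)/L = j := by
    rw [Nat.add_comm, Nat.mul_comm, Nat.add_mul_div_left _ _ hL, Nat.div_eq_of_lt ht]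
    omega
  have h2 : (j*L+t)%L = t := by
    rw [Nat.add_comm, Nat.mul_comm, Nat.add_mul_mod_self_left, Nat.mod_eq_of_lt ht]
  rw [h1, h2]

lemma sum_trunc (L l : ℕ) (hl : l < L) (c : ℕ → ℝ) :
    ∑ j ∈ range L, ind (j ≤ l) * c j = ∑ j ∈ range (l+1), c j := by
  have : ∀ j ∈ range L, ind (j ≤ l) * c j = if j ∈ range (l+1) then c j else 0 := by
    intro j _
    unfold ind
    by_cases h : j ≤ l
    · rw [if_pos h, if_pos (Finset.mem_range.2 (by omega)), one_mul]
    · rw [if_neg h, if_neg (fun hc => h (by have := Finset.mem_range.1 hc; omega)), zero_mul]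
  rw [Finset.sum_congr rfl this, Finset.sum_ite_mem, Finset.inter_eq_right.2]
  intro j hj
  rw [Finset.mem_range] at *
  omega

lemma sum_ind_eq (L t : ℕ) (ht : t < L) : ∑ t' ∈ range L, ind (t = t') = 1 := by
  unfold ind
  rw [Finset.sum_ite_eq]
  simp [Finset.mem_range.2 ht]



/-! ### Layers: P phase -/

lemma stepL_chFun {N : ℕ} (v : Fin (Wd N) → ℝ) (rm rl racc rF rq1 rq2 : Row N)
    (rE ra : Fin N → Row N) (rH1 rH2 : Fin (N+1) → Row N) :
    stepL v (mkLayer (chFun N rm rl racc rF rE rH1 rH2 rq1 rq2 ra)) =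
      chFun N (act rm v) (act rl v) (act racc v) (act rF v) (fun i => act (rE i) v)
        (fun i => act (rH1 i) v) (fun i => act (rH2 i) v) (act rq1 v) (act rq2 v)
        (fun i => act (ra i) v) := by
  rw [stepL_mkLayer]
  exact chFun_comp N rm rl racc rF rE rH1 rH2 rq1 rq2 ra (fun p => act p v)

def rFP (N : ℕ) : Row N :=
  (rowOn (fun _ : Fin 1 => chF N) (fun _ => 1)
    + rowOn (fun i : Fin N => chH1 N i.castSucc) (fun _ => 1)
    + rowOn (fun i : Fin N => chH2 N i.castSucc) (fun _ => (-1:ℝ)), 0)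

lemma act_rFP {N : ℕ} (v : Fin (Wd N) → ℝ) :
    act (rFP N) v = max (v (chF N) + ((∑ i : Fin N, v (chH1 N i.castSucc))
      - ∑ i : Fin N, v (chH2 N i.castSucc))) 0 := by
  unfold act rFP
  simp only [add_dotProduct, dot_rowOn]
  congr 1
  simp
  ring

noncomputable def FP (N m c : ℕ) : ℝ := ∑ k ∈ range (c*N), ind ((k+1)*N ≤ m)

noncomputable def H1P (N m c : ℕ) : Fin (N+1) → ℝ := fun i =>
  if i.val < N then max ((m:ℝ) - ((c*N+i.val+1)*N : ℕ) + 1) 0 else 0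

noncomputable def H2P (N m c : ℕ) : Fin (N+1) → ℝ := fun i =>
  if i.val < N then max ((m:ℝ) - ((c*N+i.val+1)*N : ℕ)) 0 else 0

noncomputable def SP (N m l c : ℕ) : Fin (Wd N) → ℝ :=
  chFun N (m:ℝ) (l:ℝ) 0 (FP N m c) (fun _ => 0) (H1P N m c) (H2P N m c) 0 0 (fun _ => 0)

def layerP (N c : ℕ) : Matrix (Fin (Wd N)) (Fin (Wd N)) ℝ × (Fin (Wd N) → ℝ) :=
  mkLayer (chFun N (r1 (chM N) 1 0) (r1 (chL N) 1 0) rZ (rFP N) (fun _ => rZ)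
    (fun i => if i.val < N then r1 (chM N) 1 (1 - ((c*N+i.val+1)*N : ℕ)) else rZ)
    (fun i => if i.val < N then r1 (chM N) 1 (-((c*N+i.val+1)*N : ℕ) : ℝ) else rZ)
    rZ rZ (fun _ => rZ))

lemma step_layerP (N m l c : ℕ) :
    stepL (SP N m l c) (layerP N (c+1)) = SP N m l (c+1) := by
  unfold layerP
  rw [stepL_chFun]
  unfold SP
  apply chFun_congr
  · rw [act_r1]
    simp only [SP, chFun_chM]
    rw [one_mul, add_zero]
    exact max_eq_left (Nat.cast_nonneg m)
  · rw [act_r1]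
    simp only [SP, chFun_chL]
    rw [one_mul, add_zero]
    exact max_eq_left (Nat.cast_nonneg l)
  · exact act_rZ _
  · rw [act_rFP]
    simp only [SP, chFun_chF, chFun_chH1, chFun_chH2]
    have h1 : ∀ i : Fin N, H1P N m c i.castSucc - H2P N m c i.castSucc
        = ind ((c*N+i.val+1)*N ≤ m) := by
      intro i
      unfold H1P H2P
      simp only [Fin.coe_castSucc]
      rw [if_pos i.2, if_pos i.2]
      exact ind_step _ m
    rw [← Finset.sum_sub_distrib, Finset.sum_congr rfl (fun i _ => h1 i),
      Fin.sum_univ_eq_sum_range (fun i => ind ((c*N+i+1)*N ≤ m)) N]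
    have hnn : (0:ℝ) ≤ FP N m c + ∑ i ∈ range N, ind ((c*N+i+1)*N ≤ m) :=
      add_nonneg (by unfold FP; exact Finset.sum_nonneg fun k _ => ind_nonneg _)
        (Finset.sum_nonneg fun k _ => ind_nonneg _)
    rw [max_eq_left hnn]
    unfold FP
    rw [show (c+1)*N = c*N + N from by ring, sum_range_add'']
  · intro i
    exact act_rZ _
  · intro i
    by_cases h : i.val < N
    · rw [if_pos h, act_r1]
      simp only [SP, chFun_chM]
      unfold H1P
      rw [if_pos h]
      congr 1
      push_cast
      ring
    · rw [if_neg h, act_rZ]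
      unfold H1P
      rw [if_neg h]
  · intro i
    by_cases h : i.val < N
    · rw [if_pos h, act_r1]
      simp only [SP, chFun_chM]
      unfold H2P
      rw [if_pos h]
      congr 1
      push_cast
      ring
    · rw [if_neg h, act_rZ]
      unfold H2P
      rw [if_neg h]
  · exact act_rZ _
  · exact act_rZ _
  · intro i
    exact act_rZ _

/-! ### Fold, R, Q1, Q2 layers -/

def layerFold (N : ℕ) : Matrix (Fin (Wd N)) (Fin (Wd N)) ℝ × (Fin (Wd N) → ℝ) :=
  mkLayer (chFun N (r1 (chM N) 1 0) (r1 (chL N) 1 0) rZ (rFP N) (fun _ => rZ)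
    (fun _ => rZ) (fun _ => rZ) rZ rZ (fun _ => rZ))

noncomputable def SD (N m l : ℕ) : Fin (Wd N) → ℝ :=
  chFun N (m:ℝ) (l:ℝ) 0 ((m/N : ℕ) : ℝ) (fun _ => 0) (fun _ => 0) (fun _ => 0) 0 0 (fun _ => 0)

lemma step_layerFold (N L m l : ℕ) (hN : 0 < N) (hL : 1 ≤ L) (hm : m < N*N*L) :
    stepL (SP N m l (L-1)) (layerFold N) = SD N m l := by
  unfold layerFold
  rw [stepL_chFun]
  unfold SD
  apply chFun_congr
  · rw [act_r1]
    simp only [SP, chFun_chM]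
    rw [one_mul, add_zero]
    exact max_eq_left (Nat.cast_nonneg m)
  · rw [act_r1]
    simp only [SP, chFun_chL]
    rw [one_mul, add_zero]
    exact max_eq_left (Nat.cast_nonneg l)
  · exact act_rZ _
  · rw [act_rFP]
    simp only [SP, chFun_chF, chFun_chH1, chFun_chH2]
    have h1 : ∀ i : Fin N, H1P N m (L-1) i.castSucc - H2P N m (L-1) i.castSucc
        = ind (((L-1)*N+i.val+1)*N ≤ m) := by
      intro i
      unfold H1P H2P
      simp only [Fin.coe_castSucc]
      rw [if_pos i.2, if_pos i.2]
      exact ind_step _ m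
    rw [← Finset.sum_sub_distrib, Finset.sum_congr rfl (fun i _ => h1 i),
      Fin.sum_univ_eq_sum_range (fun i => ind (((L-1)*N+i+1)*N ≤ m)) N]
    have hnn : (0:ℝ) ≤ FP N m (L-1) + ∑ i ∈ range N, ind (((L-1)*N+i+1)*N ≤ m) :=
      add_nonneg (by unfold FP; exact Finset.sum_nonneg fun k _ => ind_nonneg _)
        (Finset.sum_nonneg fun k _ => ind_nonneg _)
    rw [max_eq_left hnn]
    unfold FP
    rw [← sum_range_add'']
    obtain ⟨L', rfl⟩ : ∃ L', L = L'+1 := ⟨L-1, by omega⟩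
    have hLL : (L'+1-1)*N + N = (L'+1)*N := by simp; ring
    rw [hLL]
    refine count_div m N ((L'+1)*N) hN ?_
    calc m < N*N*(L'+1) := hm
      _ = (L'+1)*N*N := by ring
  · intro i; exact act_rZ _
  · intro i; exact act_rZ _
  · intro i; exact act_rZ _
  · exact act_rZ _
  · exact act_rZ _
  · intro i; exact act_rZ _

def rR (N : ℕ) : Row N :=
  (rowOn (fun _ : Fin 1 => chM N) (fun _ => 1)
    + rowOn (fun _ : Fin 1 => chF N) (fun _ => -(N:ℝ)), 0)

def layerR (N : ℕ) : Matrix (Fin (Wd N)) (Fin (Wd N)) ℝ × (Fin (Wd N) → ℝ) :=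
  mkLayer (chFun N (r1 (chM N) 1 0) (r1 (chL N) 1 0) rZ (rR N) (fun _ => rZ)
    (fun _ => rZ) (fun _ => rZ) rZ rZ (fun _ => rZ))

noncomputable def SR (N m l : ℕ) : Fin (Wd N) → ℝ :=
  chFun N (m:ℝ) (l:ℝ) 0 ((m % N : ℕ) : ℝ) (fun _ => 0) (fun _ => 0) (fun _ => 0) 0 0 (fun _ => 0)

lemma step_layerR (N m l : ℕ) : stepL (SD N m l) (layerR N) = SR N m l := by
  unfold layerR
  rw [stepL_chFun]
  unfold SR
  apply chFun_congr
  · rw [act_r1]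
    simp only [SD, chFun_chM]
    rw [one_mul, add_zero]
    exact max_eq_left (Nat.cast_nonneg m)
  · rw [act_r1]
    simp only [SD, chFun_chL]
    rw [one_mul, add_zero]
    exact max_eq_left (Nat.cast_nonneg l)
  · exact act_rZ _
  · unfold act rR
    simp only [add_dotProduct, dot_rowOn]
    simp only [Fin.sum_univ_one, SD, chFun_chM, chFun_chF]
    rw [show (1:ℝ) * (m:ℝ) + -(N:ℝ) * ((m/N : ℕ):ℝ) + 0 = (m:ℝ) - (N:ℝ) * ((m/N : ℕ):ℝ)
      from by ring]
    rw [mod_cast_sub]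
    exact max_eq_left (Nat.cast_nonneg _)
  · intro i; exact act_rZ _
  · intro i; exact act_rZ _
  · intro i; exact act_rZ _
  · exact act_rZ _
  · exact act_rZ _
  · intro i; exact act_rZ _

def layerQ1 (N : ℕ) : Matrix (Fin (Wd N)) (Fin (Wd N)) ℝ × (Fin (Wd N) → ℝ) :=
  mkLayer (chFun N (r1 (chM N) 1 0) (r1 (chL N) 1 0) rZ rZ (fun _ => rZ)
    (fun i => r1 (chF N) 1 (-(i.val : ℝ))) (fun _ => rZ) rZ rZ (fun _ => rZ))

noncomputable def SQ1 (N m l : ℕ) : Fin (Wd N) → ℝ :=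
  chFun N (m:ℝ) (l:ℝ) 0 0 (fun _ => 0)
    (fun i => max (((m % N : ℕ) : ℝ) - (i.val : ℕ)) 0) (fun _ => 0) 0 0 (fun _ => 0)

lemma step_layerQ1 (N m l : ℕ) : stepL (SR N m l) (layerQ1 N) = SQ1 N m l := by
  unfold layerQ1
  rw [stepL_chFun]
  unfold SQ1
  apply chFun_congr
  · rw [act_r1]
    simp only [SR, chFun_chM]
    rw [one_mul, add_zero]
    exact max_eq_left (Nat.cast_nonneg m)
  · rw [act_r1]
    simp only [SR, chFun_chL]
    rw [one_mul, add_zero]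
    exact max_eq_left (Nat.cast_nonneg l)
  · exact act_rZ _
  · exact act_rZ _
  · intro i; exact act_rZ _
  · intro i
    rw [act_r1]
    simp only [SR, chFun_chF]
    congr 1
    ring
  · intro i; exact act_rZ _
  · exact act_rZ _
  · exact act_rZ _
  · intro i; exact act_rZ _

def layerQ2 (N : ℕ) : Matrix (Fin (Wd N)) (Fin (Wd N)) ℝ × (Fin (Wd N) → ℝ) :=
  mkLayer (chFun N (r1 (chM N) 1 0) (r1 (chL N) 1 0) rZ rZ
    (fun i => if _ : i.val = 0 then
        (rowOn ![chH1 N ⟨0, by omega⟩, chH1 N ⟨1, by have := i.2; omega⟩] ![(-1:ℝ), 1], (1:ℝ))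
      else
        (rowOn ![chH1 N ⟨i.val-1, by have := i.2; omega⟩, chH1 N ⟨i.val, by have := i.2; omega⟩,
          chH1 N ⟨i.val+1, by have := i.2; omega⟩] ![(1:ℝ), -2, 1], (0:ℝ)))
    (fun _ => rZ) (fun _ => rZ) rZ rZ (fun _ => rZ))

noncomputable def Evec (N m : ℕ) : Fin N → ℝ := fun i => ind (m % N = i.val)

noncomputable def SB0 (N m l : ℕ) (acc : ℝ) : Fin (Wd N) → ℝ :=
  chFun N (m:ℝ) (l:ℝ) acc 0 (Evec N m) (fun _ => 0) (fun _ => 0) 0 0 (fun _ => 0)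

lemma step_layerQ2 (N m l : ℕ) : stepL (SQ1 N m l) (layerQ2 N) = SB0 N m l 0 := by
  unfold layerQ2
  rw [stepL_chFun]
  unfold SB0
  apply chFun_congr
  · rw [act_r1]
    simp only [SQ1, chFun_chM]
    rw [one_mul, add_zero]
    exact max_eq_left (Nat.cast_nonneg m)
  · rw [act_r1]
    simp only [SQ1, chFun_chL]
    rw [one_mul, add_zero]
    exact max_eq_left (Nat.cast_nonneg l)
  · exact act_rZ _
  · exact act_rZ _
  · intro i
    unfold Evec
    by_cases h : i.val = 0
    · rw [dif_pos h, h]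
      unfold act
      simp only [dot_rowOn, Fin.sum_univ_two, Matrix.cons_val_zero, Matrix.cons_val_one,
        Matrix.head_cons, SQ1, chFun_chH1, Fin.val_mk]
      rw [← hat0 (m % N)]
      congr 1
      push_cast
      ring
    · rw [dif_neg h]
      unfold act
      simp only [dot_rowOn, Fin.sum_univ_three, Matrix.cons_val_zero, Matrix.cons_val_one,
        Matrix.head_cons, Matrix.cons_val_two, Matrix.tail_cons, SQ1, chFun_chH1, Fin.val_mk]
      rw [← hati (m % N) i.val (by omega)]
      congr 1
      push_cast
      ring
  · intro i; exact act_rZ _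
  · intro i; exact act_rZ _
  · exact act_rZ _
  · exact act_rZ _
  · intro i; exact act_rZ _

/-! ### Main stage layers -/

noncomputable def H1A (N m t' : ℕ) : Fin (N+1) → ℝ := fun i =>
  max ((m:ℝ) - ((t'*N*N+i.val*N : ℕ) : ℝ) + 1) 0

noncomputable def H2A (N m t' : ℕ) : Fin (N+1) → ℝ := fun i =>
  max ((m:ℝ) - ((t'*N*N+i.val*N : ℕ) : ℝ)) 0

noncomputable def SA (N m l j t' : ℕ) (acc : ℝ) : Fin (Wd N) → ℝ :=
  chFun N (m:ℝ) (l:ℝ) acc 0 (Evec N m) (H1A N m t') (H2A N m t')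
    (max ((l:ℝ) - (j:ℝ) + 1) 0) (max ((l:ℝ) - (j:ℝ)) 0) (fun _ => 0)

noncomputable def aB (N m l j t' : ℕ) (θ : ℕ → ℕ → ℝ) : Fin N → ℝ := fun i =>
  ind (m/N = t'*N + i.val) * (ind (j ≤ l) * θ (m%N + N*i.val + N*N*t') j)

noncomputable def SBst (N m l j t' : ℕ) (θ : ℕ → ℕ → ℝ) (acc : ℝ) : Fin (Wd N) → ℝ :=
  chFun N (m:ℝ) (l:ℝ) acc 0 (Evec N m) (fun _ => 0) (fun _ => 0) 0 0 (aB N m l j t' θ)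

def layerA (N j t' : ℕ) : Matrix (Fin (Wd N)) (Fin (Wd N)) ℝ × (Fin (Wd N) → ℝ) :=
  mkLayer (chFun N (r1 (chM N) 1 0) (r1 (chL N) 1 0) (r1 (chAcc N) 1 0) rZ
    (fun i => r1 (chE N i) 1 0)
    (fun i => r1 (chM N) 1 (1 - ((t'*N*N+i.val*N : ℕ) : ℝ)))
    (fun i => r1 (chM N) 1 (-((t'*N*N+i.val*N : ℕ) : ℝ)))
    (r1 (chL N) 1 (1 - (j:ℝ))) (r1 (chL N) 1 (-(j:ℝ))) (fun _ => rZ))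

noncomputable def layerB (N : ℕ) (θ : ℕ → ℕ → ℝ) (j t' : ℕ) :
    Matrix (Fin (Wd N)) (Fin (Wd N)) ℝ × (Fin (Wd N) → ℝ) :=
  mkLayer (chFun N (r1 (chM N) 1 0) (r1 (chL N) 1 0) (r1 (chAcc N) 1 0) rZ
    (fun i => r1 (chE N i) 1 0) (fun _ => rZ) (fun _ => rZ) rZ rZ
    (fun i => (rowOn (chE N) (fun i' => θ (i'.val + N*i.val + N*N*t') j)
      + rowOn ![chH1 N i.castSucc, chH2 N i.castSucc, chH1 N i.succ, chH2 N i.succ,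
          chQ1 N, chQ2 N] ![(1:ℝ), -1, -1, 1, 1, -1], (-2:ℝ))))

def layerC (N : ℕ) : Matrix (Fin (Wd N)) (Fin (Wd N)) ℝ × (Fin (Wd N) → ℝ) :=
  mkLayer (chFun N (r1 (chM N) 1 0) (r1 (chL N) 1 0)
    (rowOn (fun _ : Fin 1 => chAcc N) (fun _ => (1:ℝ)) + rowOn (chA N) (fun _ => (1:ℝ)), 0) rZ
    (fun i => r1 (chE N i) 1 0) (fun _ => rZ) (fun _ => rZ) rZ rZ (fun _ => rZ))

lemma Evec_nonneg (N m : ℕ) (i : Fin N) : 0 ≤ Evec N m i := ind_nonneg _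

lemma act_copy_acc {N : ℕ} (v : Fin (Wd N) → ℝ) (acc : ℝ) (h : v (chAcc N) = acc)
    (hacc : 0 ≤ acc) : act (r1 (chAcc N) 1 0) v = acc := by
  rw [act_r1, h, one_mul, add_zero]
  exact max_eq_left hacc

lemma step_layerA (N m l j t' : ℕ) (acc : ℝ) (hacc : 0 ≤ acc) :
    stepL (SB0 N m l acc) (layerA N j t') = SA N m l j t' acc := by
  unfold layerA
  rw [stepL_chFun]
  unfold SA
  apply chFun_congr
  · rw [act_r1]
    simp only [SB0, chFun_chM]
    rw [one_mul, add_zero]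
    exact max_eq_left (Nat.cast_nonneg m)
  · rw [act_r1]
    simp only [SB0, chFun_chL]
    rw [one_mul, add_zero]
    exact max_eq_left (Nat.cast_nonneg l)
  · exact act_copy_acc _ _ (by simp only [SB0, chFun_chAcc]) hacc
  · exact act_rZ _
  · intro i
    rw [act_r1]
    simp only [SB0, chFun_chE]
    rw [one_mul, add_zero]
    exact max_eq_left (Evec_nonneg N m i)
  · intro i
    rw [act_r1]
    simp only [SB0, chFun_chM]
    unfold H1A
    congr 1
    ring
  · intro i
    rw [act_r1]
    simp only [SB0, chFun_chM]
    unfold H2A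
    congr 1
    ring
  · rw [act_r1]
    simp only [SB0, chFun_chL]
    congr 1
    ring
  · rw [act_r1]
    simp only [SB0, chFun_chL]
    congr 1
    ring
  · intro i; exact act_rZ _

lemma aB_val (N m l j t' : ℕ) (θ : ℕ → ℕ → ℝ) (hN : 0 < N)
    (hθ : ∀ a b, θ a b = 0 ∨ θ a b = 1) (i : Fin N) :
    max (θ (m%N + N*i.val + N*N*t') j
      + ((max ((m:ℝ) - ((t'*N*N+i.val*N : ℕ):ℝ) + 1) 0 - max ((m:ℝ) - ((t'*N*N+i.val*N : ℕ):ℝ)) 0)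
         - (max ((m:ℝ) - ((t'*N*N+(i.val+1)*N : ℕ):ℝ) + 1) 0
            - max ((m:ℝ) - ((t'*N*N+(i.val+1)*N : ℕ):ℝ)) 0)
         + (max ((l:ℝ) - (j:ℝ) + 1) 0 - max ((l:ℝ) - (j:ℝ)) 0) + -2)) 0
      = aB N m l j t' θ i := by
  have e1 := ind_step (t'*N*N+i.val*N) m
  have e2 := ind_step (t'*N*N+(i.val+1)*N) m
  have e3 := ind_step j l
  rw [e1, e2, e3, ecombo_eq N t' i.val m hN]
  unfold aB
  exact and3 (ind (m/N = t'*N + i.val)) (ind (j ≤ l)) (θ (m%N + N*i.val + N*N*t') j)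
    (ind_zero_one _) (ind_zero_one _) (hθ _ _)

lemma step_layerB (N m l j t' : ℕ) (θ : ℕ → ℕ → ℝ) (acc : ℝ) (hacc : 0 ≤ acc)
    (hN : 0 < N) (hθ : ∀ a b, θ a b = 0 ∨ θ a b = 1) :
    stepL (SA N m l j t' acc) (layerB N θ j t') = SBst N m l j t' θ acc := by
  unfold layerB
  rw [stepL_chFun]
  unfold SBst
  apply chFun_congr
  · rw [act_r1]
    simp only [SA, chFun_chM]
    rw [one_mul, add_zero]
    exact max_eq_left (Nat.cast_nonneg m)
  · rw [act_r1]
    simp only [SA, chFun_chL]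
    rw [one_mul, add_zero]
    exact max_eq_left (Nat.cast_nonneg l)
  · exact act_copy_acc _ _ (by simp only [SA, chFun_chAcc]) hacc
  · exact act_rZ _
  · intro i
    rw [act_r1]
    simp only [SA, chFun_chE]
    rw [one_mul, add_zero]
    exact max_eq_left (Evec_nonneg N m i)
  · intro i; exact act_rZ _
  · intro i; exact act_rZ _
  · exact act_rZ _
  · exact act_rZ _
  · intro i
    unfold act
    simp only [add_dotProduct, dot_rowOn, Fin.sum_univ_succ, Finset.univ_eq_empty,
      Finset.sum_empty, Matrix.cons_val_zero, Matrix.cons_val_succ, SA, chFun_chE,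
      chFun_chH1, chFun_chH2, chFun_chQ1, chFun_chQ2]
    have hsum : ∑ i' : Fin N, θ (i'.val + N*i.val + N*N*t') j * Evec N m i'
        = θ (m%N + N*i.val + N*N*t') j := by
      unfold Evec
      rw [onehot_sum (m%N) (Nat.mod_lt m hN) (fun i' => θ (i'.val + N*i.val + N*N*t') j)]
    rw [hsum]
    rw [← aB_val N m l j t' θ hN hθ i]
    congr 1
    unfold H1A H2A
    simp only [Fin.coe_castSucc, Fin.val_succ]
    push_cast
    ring

/-! ### layer C step, stage lemma, assembly -/

lemma aB_nonneg (N m l j t' : ℕ) (θ : ℕ → ℕ → ℝ) (hθ : ∀ a b, θ a b = 0 ∨ θ a b = 1)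
    (i : Fin N) : 0 ≤ aB N m l j t' θ i := by
  unfold aB
  have hθ' : 0 ≤ θ (m%N + N*i.val + N*N*t') j := by
    rcases hθ (m%N + N*i.val + N*N*t') j with h | h <;> rw [h] <;> norm_num
  exact mul_nonneg (ind_nonneg _) (mul_nonneg (ind_nonneg _) hθ')

lemma step_layerC (N m l j t' : ℕ) (θ : ℕ → ℕ → ℝ) (acc : ℝ) (hacc : 0 ≤ acc)
    (hθ : ∀ a b, θ a b = 0 ∨ θ a b = 1) :
    stepL (SBst N m l j t' θ acc) (layerC N)
      = SB0 N m l (acc + ∑ i : Fin N, aB N m l j t' θ i) := by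
  unfold layerC
  rw [stepL_chFun]
  unfold SB0
  apply chFun_congr
  · rw [act_r1]
    simp only [SBst, chFun_chM]
    rw [one_mul, add_zero]
    exact max_eq_left (Nat.cast_nonneg m)
  · rw [act_r1]
    simp only [SBst, chFun_chL]
    rw [one_mul, add_zero]
    exact max_eq_left (Nat.cast_nonneg l)
  · unfold act
    simp only [add_dotProduct, dot_rowOn, Fin.sum_univ_one, one_mul, SBst, chFun_chAcc,
      chFun_chA, add_zero]
    exact max_eq_left (add_nonneg hacc (Finset.sum_nonneg fun i _ => aB_nonneg N m l j t' θ hθ i))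
  · exact act_rZ _
  · intro i
    rw [act_r1]
    simp only [SBst, chFun_chE]
    rw [one_mul, add_zero]
    exact max_eq_left (Evec_nonneg N m i)
  · intro i; exact act_rZ _
  · intro i; exact act_rZ _
  · exact act_rZ _
  · exact act_rZ _
  · intro i; exact act_rZ _

noncomputable def gval (N L : ℕ) (θ : ℕ → ℕ → ℝ) (m l k : ℕ) : ℝ :=
  ind (m/N/N = k%L) * (ind (k/L ≤ l) * θ m (k/L))

lemma gval_nonneg (N L : ℕ) (θ : ℕ → ℕ → ℝ) (m l k : ℕ)
    (hθ : ∀ a b, θ a b = 0 ∨ θ a b = 1) : 0 ≤ gval N L θ m l k := by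
  unfold gval
  have hθ' : 0 ≤ θ m (k/L) := by rcases hθ m (k/L) with h | h <;> rw [h] <;> norm_num
  exact mul_nonneg (ind_nonneg _) (mul_nonneg (ind_nonneg _) hθ')

noncomputable def SM (N L : ℕ) (θ : ℕ → ℕ → ℝ) (m l k : ℕ) : Fin (Wd N) → ℝ :=
  SB0 N m l (∑ k' ∈ range k, gval N L θ m l k')

lemma step_stage (N L m l k : ℕ) (θ : ℕ → ℕ → ℝ) (hN : 0 < N)
    (hθ : ∀ a b, θ a b = 0 ∨ θ a b = 1) :
    List.foldl stepL (SM N L θ m l k)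
      [layerA N (k/L) (k%L), layerB N θ (k/L) (k%L), layerC N] = SM N L θ m l (k+1) := by
  have hacc : 0 ≤ ∑ k' ∈ range k, gval N L θ m l k' :=
    Finset.sum_nonneg fun k' _ => gval_nonneg N L θ m l k' hθ
  show stepL (stepL (stepL (SM N L θ m l k) _) _) _ = _
  unfold SM
  rw [step_layerA N m l (k/L) (k%L) _ hacc,
    step_layerB N m l (k/L) (k%L) θ _ hacc hN hθ,
    step_layerC N m l (k/L) (k%L) θ _ hacc hθ]
  refine congrArg (SB0 N m l) ?_
  rw [Finset.sum_range_succ]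
  congr 1
  unfold gval aB
  exact stage_total hN m (k/L) l (k%L) θ

lemma foldl_map {σ α : Type*} (stp : σ → α → σ) (f : ℕ → α) (S : ℕ → σ) (n : ℕ)
    (h : ∀ c < n, stp (S c) (f c) = S (c+1)) :
    List.foldl stp (S 0) ((List.range n).map f) = S n := by
  induction n with
  | zero => simp
  | succ n ih =>
    rw [List.range_succ, List.map_append, List.foldl_append,
      ih (fun c hc => h c (by omega))]
    simp [h n (by omega)]

lemma foldl_flat {σ α : Type*} (stp : σ → α → σ) (g : ℕ → List α) (S : ℕ → σ) (n : ℕ)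
    (h : ∀ c < n, List.foldl stp (S c) (g c) = S (c+1)) :
    List.foldl stp (S 0) ((List.range n).map g).flatten = S n := by
  induction n with
  | zero => simp
  | succ n ih =>
    rw [List.range_succ, List.map_append, List.flatten_append, List.foldl_append,
      ih (fun c hc => h c (by omega))]
    simp [List.foldl_append, h n (by omega)]

/-! ### Input layer -/

def inRows (N : ℕ) : Fin (Wd N) → (Fin 2 → ℝ) × ℝ :=
  chFun N (![1,0], 0) (![0,1], 0) ((fun _ => 0), 0) ((fun _ => 0), 0)
    (fun _ => ((fun _ => 0), 0))
    (fun i => if i.val < N then (![1,0], 1 - (((i.val+1)*N : ℕ):ℝ)) else ((fun _ => 0), 0))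
    (fun i => if i.val < N then (![1,0], -(((i.val+1)*N : ℕ):ℝ)) else ((fun _ => 0), 0))
    ((fun _ => 0), 0) ((fun _ => 0), 0) (fun _ => ((fun _ => 0), 0))

def A0 (N : ℕ) : Matrix (Fin (Wd N)) (Fin 2) ℝ := Matrix.of fun i j => (inRows N i).1 j

def b0 (N : ℕ) : Fin (Wd N) → ℝ := fun i => (inRows N i).2

lemma init_eval (N m l : ℕ) :
    (fun i => max (((A0 N).mulVec ![(m:ℝ), (l:ℝ)] + b0 N) i) 0) = SP N m l 0 := by
  have h0 : (fun i => max (((A0 N).mulVec ![(m:ℝ), (l:ℝ)] + b0 N) i) 0)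
      = fun i => (fun p : (Fin 2 → ℝ) × ℝ =>
          max (dotProduct p.1 ![(m:ℝ),(l:ℝ)] + p.2) 0) (inRows N i) := rfl
  rw [h0]
  unfold inRows
  rw [chFun_comp N _ _ _ _ _ _ _ _ _ _
    (fun p : (Fin 2 → ℝ) × ℝ => max (dotProduct p.1 ![(m:ℝ),(l:ℝ)] + p.2) 0)]
  unfold SP
  apply chFun_congr
  · simp only [dotProduct, Fin.sum_univ_two, Matrix.cons_val_zero, Matrix.cons_val_one,
      Matrix.head_cons]
    rw [show (1:ℝ) * (m:ℝ) + 0 * (l:ℝ) + 0 = (m:ℝ) from by ring]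
    exact max_eq_left (Nat.cast_nonneg m)
  · simp only [dotProduct, Fin.sum_univ_two, Matrix.cons_val_zero, Matrix.cons_val_one,
      Matrix.head_cons]
    rw [show (0:ℝ) * (m:ℝ) + 1 * (l:ℝ) + 0 = (l:ℝ) from by ring]
    exact max_eq_left (Nat.cast_nonneg l)
  · simp [dotProduct]
  · simp [dotProduct, FP]
  · intro i; simp [dotProduct]
  · intro i
    by_cases h : i.val < N
    · rw [if_pos h]
      simp only [dotProduct, Fin.sum_univ_two, Matrix.cons_val_zero, Matrix.cons_val_one,
        Matrix.head_cons]
      unfold H1P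
      rw [if_pos h]
      congr 1
      push_cast
      ring
    · rw [if_neg h]
      unfold H1P
      rw [if_neg h]
      simp [dotProduct]
  · intro i
    by_cases h : i.val < N
    · rw [if_pos h]
      simp only [dotProduct, Fin.sum_univ_two, Matrix.cons_val_zero, Matrix.cons_val_one,
        Matrix.head_cons]
      unfold H2P
      rw [if_pos h]
      congr 1
      push_cast
      ring
    · rw [if_neg h]
      unfold H2P
      rw [if_neg h]
      simp [dotProduct]
  · simp [dotProduct]
  · simp [dotProduct]
  · intro i; simp [dotProduct]

noncomputable def hiddenL (N L : ℕ) (θ : ℕ → ℕ → ℝ) :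
    List (Matrix (Fin (Wd N)) (Fin (Wd N)) ℝ × (Fin (Wd N) → ℝ)) :=
  ((List.range (L-1)).map (fun c => layerP N (c+1)))
    ++ [layerFold N, layerR N, layerQ1 N, layerQ2 N]
    ++ ((List.range (L*L)).map
        (fun k => [layerA N (k/L) (k%L), layerB N θ (k/L) (k%L), layerC N])).flatten

noncomputable def AoutV (N : ℕ) : Fin (Wd N) → ℝ := rowOn (fun _ : Fin 1 => chAcc N) (fun _ => 1)

lemma net_correct (N L m l : ℕ) (θ : ℕ → ℕ → ℝ) (hN : 1 ≤ N) (hL : 1 ≤ L)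
    (hm : m < N*N*L) (hl : l < L) (hθ : ∀ a b, θ a b = 0 ∨ θ a b = 1) :
    netEval (A0 N) (b0 N) (hiddenL N L θ) (AoutV N) 0 ![(m:ℝ), (l:ℝ)]
      = ∑ j ∈ Finset.range (l+1), θ m j := by
  have hN' : 0 < N := hN
  unfold netEval
  have hfold : List.foldl (fun v p => fun i => max ((p.1.mulVec v + p.2) i) 0)
      (fun i => max (((A0 N).mulVec ![(m:ℝ), (l:ℝ)] + b0 N) i) 0) (hiddenL N L θ)
      = SM N L θ m l (L*L) := by
    show List.foldl stepL _ _ = _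
    rw [init_eval]
    unfold hiddenL
    rw [List.foldl_append, List.foldl_append]
    rw [foldl_map stepL (fun c => layerP N (c+1)) (SP N m l) (L-1)
      (fun c _ => step_layerP N m l c)]
    show List.foldl stepL (stepL (stepL (stepL (stepL (SP N m l (L-1)) (layerFold N))
      (layerR N)) (layerQ1 N)) (layerQ2 N)) _ = _
    rw [step_layerFold N L m l hN' hL hm, step_layerR, step_layerQ1, step_layerQ2]
    have hSM0 : SB0 N m l 0 = SM N L θ m l 0 := by
      unfold SM
      rw [Finset.sum_range_zero]
    rw [hSM0]
    exact foldl_flat stepL _ (SM N L θ m l) (L*L)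
      (fun k _ => step_stage N L m l k θ hN' hθ)
  rw [hfold]
  rw [show (∑ i, AoutV N i * SM N L θ m l (L*L) i) = dotProduct (AoutV N) (SM N L θ m l (L*L))
    from rfl]
  unfold AoutV
  rw [dot_rowOn]
  simp only [Fin.sum_univ_one, one_mul]
  unfold SM SB0
  rw [chFun_chAcc]
  have hreindex : ∑ k' ∈ range (L*L), gval N L θ m l k'
      = ∑ jj ∈ range L, ∑ t' ∈ range L, ind (m/N/N = t') * (ind (jj ≤ l) * θ m jj) :=
    divmod_reindex L hL (fun a b => ind (m/N/N = b) * (ind (a ≤ l) * θ m a))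
  rw [hreindex]
  have hdd : m/N/N < L := by
    rw [Nat.div_div_eq_div_mul, Nat.div_lt_iff_lt_mul (by positivity)]
    calc m < N*N*L := hm
      _ = L*(N*N) := by ring
  have hinner : ∀ jj, ∑ t' ∈ range L, ind (m/N/N = t') * (ind (jj ≤ l) * θ m jj)
      = ind (jj ≤ l) * θ m jj := by
    intro jj
    rw [← Finset.sum_mul, sum_ind_eq L (m/N/N) hdd, one_mul]
  rw [Finset.sum_congr rfl (fun jj _ => hinner jj)]
  rw [sum_trunc L l hl (fun jj => θ m jj)]
  norm_num

/-! ### Parameter bounds -/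

section Bounds

variable {N L : ℕ}

lemma abs_r1_bound (B : ℝ) (c : Fin (Wd N)) (a b : ℝ) (ha : |a| ≤ B) (hb : |b| ≤ B) :
    (∀ j, |(r1 c a b).1 j| ≤ B) ∧ |(r1 c a b).2| ≤ B := by
  constructor
  · intro j
    refine abs_rowOn_le _ _ B ?_ j
    simpa using ha
  · exact hb

lemma abs_rZ_bound (B : ℝ) (hB : 0 ≤ B) :
    (∀ j, |(rZ : Row N).1 j| ≤ B) ∧ |(rZ : Row N).2| ≤ B := by
  constructor
  · intro j
    simp only [rZ, Pi.zero_apply, abs_zero]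
    exact hB
  · simp only [rZ, abs_zero]
    exact hB

lemma mkLayer_bound (B : ℝ) (r : Fin (Wd N) → Row N)
    (h : ∀ i, (∀ j, |(r i).1 j| ≤ B) ∧ |(r i).2| ≤ B) :
    (∀ i j, |(mkLayer r).1 i j| ≤ B) ∧ (∀ i, |(mkLayer r).2 i| ≤ B) :=
  ⟨fun i j => (h i).1 j, fun i => (h i).2⟩

lemma nat_bias_bound (B : ℝ) (K : ℕ) (hK : (K:ℝ) ≤ B) (hB : 1 ≤ B) :
    |1 - (K:ℝ)| ≤ B ∧ |(-(K:ℝ))| ≤ B := by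
  have h0 : (0:ℝ) ≤ K := Nat.cast_nonneg K
  constructor
  · rw [abs_le]
    constructor <;> linarith
  · rw [abs_neg, abs_of_nonneg h0]
    exact hK

lemma abs_add2_le (a b A B2 : ℝ) (ha : |a| ≤ A) (hb : |b| ≤ B2) : |a + b| ≤ A + B2 := by
  have := abs_add_le a b
  linarith

lemma abs_add3_le (a b c A B2 C : ℝ) (ha : |a| ≤ A) (hb : |b| ≤ B2) (hc : |c| ≤ C) :
    |a + b + c| ≤ A + B2 + C := by
  have t1 := abs_add_le (a+b) c
  have t2 := abs_add_le a b
  linarith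

def RB (N : ℕ) (B : ℝ) (p : Row N) : Prop := (∀ j, |p.1 j| ≤ B) ∧ |p.2| ≤ B

lemma chFun_rows_bound (N : ℕ) (B : ℝ) (rm rl racc rF rq1 rq2 : Row N)
    (rE ra : Fin N → Row N) (rH1 rH2 : Fin (N+1) → Row N)
    (h1 : RB N B rm) (h2 : RB N B rl) (h3 : RB N B racc) (h4 : RB N B rF)
    (h5 : ∀ i, RB N B (rE i)) (h6 : ∀ i, RB N B (rH1 i)) (h7 : ∀ i, RB N B (rH2 i))
    (h8 : RB N B rq1) (h9 : RB N B rq2) (h10 : ∀ i, RB N B (ra i)) :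
    (∀ i j, |(mkLayer (chFun N rm rl racc rF rE rH1 rH2 rq1 rq2 ra)).1 i j| ≤ B) ∧
      (∀ i, |(mkLayer (chFun N rm rl racc rF rE rH1 rH2 rq1 rq2 ra)).2 i| ≤ B) :=
  mkLayer_bound B _ (fun i =>
    chFun_forall N rm rl racc rF rE rH1 rH2 rq1 rq2 ra (RB N B) h1 h2 h3 h4 h5 h6 h7 h8 h9 h10 i)

end Bounds

lemma RB_r1 {N : ℕ} (B : ℝ) (c : Fin (Wd N)) (a b : ℝ) (ha : |a| ≤ B) (hb : |b| ≤ B) :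
    RB N B (r1 c a b) := abs_r1_bound B c a b ha hb

lemma RB_rZ {N : ℕ} (B : ℝ) (hB : 0 ≤ B) : RB N B rZ := abs_rZ_bound B hB

lemma hidden_bounds (N L : ℕ) (θ : ℕ → ℕ → ℝ) (hN : 1 ≤ N) (hL : 1 ≤ L)
    (hθ : ∀ a b, θ a b = 0 ∨ θ a b = 1) :
    ∀ p ∈ hiddenL N L θ,
      (∀ i j, |p.1 i j| ≤ 12*(N:ℝ)^2*L) ∧ (∀ i, |p.2 i| ≤ 12*(N:ℝ)^2*L) := by
  set B : ℝ := 12*(N:ℝ)^2*L with hBdef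
  have hNR : (1:ℝ) ≤ N := by exact_mod_cast hN
  have hLR : (1:ℝ) ≤ L := by exact_mod_cast hL
  have hB1 : 1 ≤ B := by rw [hBdef]; nlinarith
  have hB0 : 0 ≤ B := by linarith
  have hNNL : ((N*N*L : ℕ) : ℝ) ≤ B := by push_cast; rw [hBdef]; nlinarith
  have hNB : (N:ℝ) + 6 ≤ B := by rw [hBdef]; nlinarith
  have h2NB : 1 + ((N:ℝ) + (N:ℝ)) ≤ B := by rw [hBdef]; nlinarith
  have hN2 : (1:ℝ) ≤ (N:ℝ)^2 := by nlinarith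
  have hLB : (L:ℝ) ≤ B := by rw [hBdef]; nlinarith
  have habs1 : |(1:ℝ)| ≤ B := by rw [abs_one]; exact hB1
  have habs0 : |(0:ℝ)| ≤ B := by rw [abs_zero]; exact hB0
  -- bound for the rFP row
  have hrFP : RB N B (rFP N) := by
    constructor
    · intro j
      unfold rFP
      simp only [Pi.add_apply]
      have b1 : |rowOn (fun _ : Fin 1 => chF N) (fun _ => (1:ℝ)) j| ≤ 1 :=
        abs_rowOn_le _ _ 1 (by simp) j
      have b2 : |rowOn (fun i : Fin N => chH1 N i.castSucc) (fun _ => (1:ℝ)) j| ≤ N :=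
        abs_rowOn_le _ _ N (by simp) j
      have b3 : |rowOn (fun i : Fin N => chH2 N i.castSucc) (fun _ => (-1:ℝ)) j| ≤ N :=
        abs_rowOn_le _ _ N (by simp) j
      have := abs_add3_le _ _ _ _ _ _ b1 b2 b3
      linarith
    · unfold rFP
      simpa using hB0
  intro p hp
  unfold hiddenL at hp
  rw [List.mem_append, List.mem_append] at hp
  rcases hp with (hp | hp) | hp
  · -- layerP
    rw [List.mem_map] at hp
    obtain ⟨c, hc, rfl⟩ := hp
    rw [List.mem_range] at hc
    unfold layerP
    apply chFun_rows_bound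
    · exact RB_r1 B _ 1 0 habs1 habs0
    · exact RB_r1 B _ 1 0 habs1 habs0
    · exact RB_rZ B hB0
    · exact hrFP
    · intro i; exact RB_rZ B hB0
    · intro i
      by_cases h : i.val < N
      · rw [if_pos h]
        have hK : (((c+1)*N+i.val+1)*N : ℕ) ≤ N*N*L := by
          have h1 : (c+1)*N+i.val+1 ≤ N*L := by
            have : c+1 ≤ L-1 := by omega
            have h2 : (c+1)*N ≤ (L-1)*N := Nat.mul_le_mul_right N this
            have h3 : (L-1)*N + N ≤ L*N := by
              calc (L-1)*N + N = (L-1+1)*N := by ring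
                _ ≤ L*N := Nat.mul_le_mul_right N (by omega)
            have h4 : L*N = N*L := Nat.mul_comm L N
            omega
          calc ((c+1)*N+i.val+1)*N ≤ (N*L)*N := Nat.mul_le_mul_right N h1
            _ = N*N*L := by ring
        have hKR : ((((c+1)*N+i.val+1)*N : ℕ) : ℝ) ≤ B := le_trans (by exact_mod_cast hK) hNNL
        exact RB_r1 B _ 1 _ habs1 (nat_bias_bound B _ hKR hB1).1
      · rw [if_neg h]; exact RB_rZ B hB0
    · intro i
      by_cases h : i.val < N
      · rw [if_pos h]
        have hK : (((c+1)*N+i.val+1)*N : ℕ) ≤ N*N*L := by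
          have h1 : (c+1)*N+i.val+1 ≤ N*L := by
            have : c+1 ≤ L-1 := by omega
            have h2 : (c+1)*N ≤ (L-1)*N := Nat.mul_le_mul_right N this
            have h3 : (L-1)*N + N ≤ L*N := by
              calc (L-1)*N + N = (L-1+1)*N := by ring
                _ ≤ L*N := Nat.mul_le_mul_right N (by omega)
            have h4 : L*N = N*L := Nat.mul_comm L N
            omega
          calc ((c+1)*N+i.val+1)*N ≤ (N*L)*N := Nat.mul_le_mul_right N h1
            _ = N*N*L := by ring
        have hKR : ((((c+1)*N+i.val+1)*N : ℕ) : ℝ) ≤ B := le_trans (by exact_mod_cast hK) hNNL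
        exact RB_r1 B _ 1 _ habs1 (nat_bias_bound B _ hKR hB1).2
      · rw [if_neg h]; exact RB_rZ B hB0
    · exact RB_rZ B hB0
    · exact RB_rZ B hB0
    · intro i; exact RB_rZ B hB0
  · -- the four middle layers
    fin_cases hp
    · -- layerFold
      apply chFun_rows_bound
      · exact RB_r1 B _ 1 0 habs1 habs0
      · exact RB_r1 B _ 1 0 habs1 habs0
      · exact RB_rZ B hB0
      · exact hrFP
      · intro i; exact RB_rZ B hB0
      · intro i; exact RB_rZ B hB0
      · intro i; exact RB_rZ B hB0
      · exact RB_rZ B hB0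
      · exact RB_rZ B hB0
      · intro i; exact RB_rZ B hB0
    · -- layerR
      apply chFun_rows_bound
      · exact RB_r1 B _ 1 0 habs1 habs0
      · exact RB_r1 B _ 1 0 habs1 habs0
      · exact RB_rZ B hB0
      · refine ⟨?_, ?_⟩
        · intro j
          unfold rR
          simp only [Pi.add_apply]
          have b1 : |rowOn (fun _ : Fin 1 => chM N) (fun _ => (1:ℝ)) j| ≤ 1 :=
            abs_rowOn_le _ _ 1 (by simp) j
          have b2 : |rowOn (fun _ : Fin 1 => chF N) (fun _ => -(N:ℝ)) j| ≤ N := by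
            refine abs_rowOn_le _ _ N ?_ j
            simp
          have := abs_add2_le _ _ _ _ b1 b2
          linarith
        · unfold rR
          simpa using hB0
      · intro i; exact RB_rZ B hB0
      · intro i; exact RB_rZ B hB0
      · intro i; exact RB_rZ B hB0
      · exact RB_rZ B hB0
      · exact RB_rZ B hB0
      · intro i; exact RB_rZ B hB0
    · -- layerQ1
      apply chFun_rows_bound
      · exact RB_r1 B _ 1 0 habs1 habs0
      · exact RB_r1 B _ 1 0 habs1 habs0
      · exact RB_rZ B hB0
      · exact RB_rZ B hB0
      · intro i; exact RB_rZ B hB0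
      · intro i
        refine RB_r1 B _ 1 _ habs1 ?_
        rw [abs_neg, abs_of_nonneg (Nat.cast_nonneg _)]
        have hi := i.2
        have : (i.val : ℝ) ≤ N := by exact_mod_cast (show i.val ≤ N by omega)
        linarith
      · intro i; exact RB_rZ B hB0
      · exact RB_rZ B hB0
      · exact RB_rZ B hB0
      · intro i; exact RB_rZ B hB0
    · -- layerQ2
      apply chFun_rows_bound
      · exact RB_r1 B _ 1 0 habs1 habs0
      · exact RB_r1 B _ 1 0 habs1 habs0
      · exact RB_rZ B hB0
      · exact RB_rZ B hB0
      · intro i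
        by_cases h : i.val = 0
        · rw [dif_pos h]
          refine ⟨?_, ?_⟩
          · intro j
            refine abs_rowOn_le _ _ B ?_ j
            rw [Fin.sum_univ_two]
            simp only [Matrix.cons_val_zero, Matrix.cons_val_one, Matrix.head_cons]
            rw [abs_neg, abs_one]
            linarith
          · exact habs1
        · rw [dif_neg h]
          refine ⟨?_, ?_⟩
          · intro j
            refine abs_rowOn_le _ _ B ?_ j
            rw [Fin.sum_univ_three]
            simp only [Matrix.cons_val_zero, Matrix.cons_val_one, Matrix.head_cons,
              Matrix.cons_val_two, Matrix.tail_cons]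
            rw [abs_one, abs_neg]
            have : |(2:ℝ)| = 2 := by norm_num
            rw [this]
            linarith
          · exact habs0
      · intro i; exact RB_rZ B hB0
      · intro i; exact RB_rZ B hB0
      · exact RB_rZ B hB0
      · exact RB_rZ B hB0
      · intro i; exact RB_rZ B hB0
  · -- main layers
    rw [List.mem_flatten] at hp
    obtain ⟨lst, hlst, hplst⟩ := hp
    rw [List.mem_map] at hlst
    obtain ⟨k, hk, rfl⟩ := hlst
    rw [List.mem_range] at hk
    have hjt : k/L < L ∧ k%L < L := by
      constructor
      · rw [Nat.div_lt_iff_lt_mul (show 0 < L by omega)]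
        exact hk
      · exact Nat.mod_lt k (by omega)
    have hbiasA : ∀ i : Fin (N+1), (((k%L)*N*N+i.val*N : ℕ) : ℝ) ≤ B := by
      intro i
      have hK : (k%L)*N*N+i.val*N ≤ N*N*L := by
        have h1 : (k%L)*N*N ≤ (L-1)*N*N := by
          have := hjt.2
          exact Nat.mul_le_mul_right _ (Nat.mul_le_mul_right _ (by omega))
        have h2 : i.val*N ≤ N*N := by
          have := i.2
          exact Nat.mul_le_mul_right _ (by omega)
        have h3 : (L-1)*N*N + N*N = L*N*N := by
          calc (L-1)*N*N + N*N = ((L-1)+1)*(N*N) := by ring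
            _ = L*(N*N) := by rw [show (L-1)+1 = L from by omega]
            _ = L*N*N := by ring
        calc (k%L)*N*N+i.val*N ≤ (L-1)*N*N + N*N := by omega
          _ = L*N*N := h3
          _ = N*N*L := by ring
      exact le_trans (by exact_mod_cast hK) hNNL
    have hjB : ((k/L : ℕ) : ℝ) ≤ B := by
      have : ((k/L : ℕ) : ℝ) ≤ L := by exact_mod_cast Nat.le_of_lt hjt.1
      linarith
    simp only [List.mem_cons, List.not_mem_nil, or_false] at hplst
    rcases hplst with rfl | rfl | rfl
    · -- layerA
      apply chFun_rows_bound
      · exact RB_r1 B _ 1 0 habs1 habs0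
      · exact RB_r1 B _ 1 0 habs1 habs0
      · exact RB_r1 B _ 1 0 habs1 habs0
      · exact RB_rZ B hB0
      · intro i; exact RB_r1 B _ 1 0 habs1 habs0
      · intro i
        exact RB_r1 B _ 1 _ habs1 (nat_bias_bound B _ (hbiasA i) hB1).1
      · intro i
        exact RB_r1 B _ 1 _ habs1 (nat_bias_bound B _ (hbiasA i) hB1).2
      · refine RB_r1 B _ 1 _ habs1 ?_
        have := (nat_bias_bound B (k/L) hjB hB1).1
        exact this
      · refine RB_r1 B _ 1 _ habs1 ?_
        have := (nat_bias_bound B (k/L) hjB hB1).2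
        exact this
      · intro i; exact RB_rZ B hB0
    · -- layerB
      apply chFun_rows_bound
      · exact RB_r1 B _ 1 0 habs1 habs0
      · exact RB_r1 B _ 1 0 habs1 habs0
      · exact RB_r1 B _ 1 0 habs1 habs0
      · exact RB_rZ B hB0
      · intro i; exact RB_r1 B _ 1 0 habs1 habs0
      · intro i; exact RB_rZ B hB0
      · intro i; exact RB_rZ B hB0
      · exact RB_rZ B hB0
      · exact RB_rZ B hB0
      · intro i
        refine ⟨?_, ?_⟩
        · intro j
          simp only [Pi.add_apply]
          have b1 : |rowOn (chE N) (fun i' => θ (i'.val + N*i.val + N*N*(k%L)) (k/L)) j| ≤ N := by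
            refine abs_rowOn_le _ _ N ?_ j
            calc ∑ i' : Fin N, |θ (i'.val + N*i.val + N*N*(k%L)) (k/L)|
                ≤ ∑ i' : Fin N, 1 := by
                  refine Finset.sum_le_sum fun i' _ => ?_
                  rcases hθ (i'.val + N*i.val + N*N*(k%L)) (k/L) with h | h <;>
                    rw [h] <;> norm_num
              _ = N := by simp
          have b2 : |rowOn ![chH1 N i.castSucc, chH2 N i.castSucc, chH1 N i.succ,
              chH2 N i.succ, chQ1 N, chQ2 N] ![(1:ℝ), -1, -1, 1, 1, -1] j| ≤ 6 := by
            refine abs_rowOn_le _ _ 6 ?_ j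
            simp only [Fin.sum_univ_succ, Finset.univ_eq_empty, Finset.sum_empty,
              Matrix.cons_val_zero, Matrix.cons_val_succ]
            norm_num
          have := abs_add2_le _ _ _ _ b1 b2
          linarith
        · have : |(-2 : ℝ)| = 2 := by norm_num
          rw [this]
          linarith
    · -- layerC
      apply chFun_rows_bound
      · exact RB_r1 B _ 1 0 habs1 habs0
      · exact RB_r1 B _ 1 0 habs1 habs0
      · refine ⟨?_, ?_⟩
        · intro j
          simp only [Pi.add_apply]
          have b1 : |rowOn (fun _ : Fin 1 => chAcc N) (fun _ => (1:ℝ)) j| ≤ 1 :=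
            abs_rowOn_le _ _ 1 (by simp) j
          have b2 : |rowOn (chA N) (fun _ => (1:ℝ)) j| ≤ N :=
            abs_rowOn_le _ _ N (by simp) j
          have := abs_add2_le _ _ _ _ b1 b2
          linarith
        · exact habs0
      · exact RB_rZ B hB0
      · intro i; exact RB_r1 B _ 1 0 habs1 habs0
      · intro i; exact RB_rZ B hB0
      · intro i; exact RB_rZ B hB0
      · exact RB_rZ B hB0
      · exact RB_rZ B hB0
      · intro i; exact RB_rZ B hB0

/-! ### Input bounds, length, final assembly -/

lemma in_bounds (N L : ℕ) (hN : 1 ≤ N) (hL : 1 ≤ L) :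
    (∀ i j, |A0 N i j| ≤ 12*(N:ℝ)^2*L) ∧ (∀ i, |b0 N i| ≤ 12*(N:ℝ)^2*L) := by
  set B : ℝ := 12*(N:ℝ)^2*L with hBdef
  have hNR : (1:ℝ) ≤ N := by exact_mod_cast hN
  have hLR : (1:ℝ) ≤ L := by exact_mod_cast hL
  have hB1 : 1 ≤ B := by rw [hBdef]; nlinarith
  have hB0 : 0 ≤ B := by linarith
  have hNNL : ((N*N*L : ℕ) : ℝ) ≤ B := by push_cast; rw [hBdef]; nlinarith
  have key : ∀ i, (∀ j, |(inRows N i).1 j| ≤ B) ∧ |(inRows N i).2| ≤ B := by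
    have h10 : ∀ j : Fin 2, |(![(1:ℝ),0]) j| ≤ B := by
      intro j
      fin_cases j <;> simp <;> linarith
    have h01 : ∀ j : Fin 2, |(![(0:ℝ),1]) j| ≤ B := by
      intro j
      fin_cases j <;> simp <;> linarith
    have hz : ∀ j : Fin 2, |(fun _ : Fin 2 => (0:ℝ)) j| ≤ B := by
      intro j
      simpa using hB0
    have hbias : ∀ i : Fin (N+1), i.val < N → (((i.val+1)*N : ℕ) : ℝ) ≤ B := by
      intro i hi
      have hK : (i.val+1)*N ≤ N*N*L := by
        have h1 : (i.val+1)*N ≤ N*N := Nat.mul_le_mul_right N (by omega)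
        have h3 : N*N*1 ≤ N*N*L := Nat.mul_le_mul_left (N*N) hL
        omega
      exact le_trans (by exact_mod_cast hK) hNNL
    unfold inRows
    apply chFun_forall N _ _ _ _ _ _ _ _ _ _
      (fun p : (Fin 2 → ℝ) × ℝ => (∀ j, |p.1 j| ≤ B) ∧ |p.2| ≤ B)
    · exact ⟨h10, by simpa using hB0⟩
    · exact ⟨h01, by simpa using hB0⟩
    · exact ⟨hz, by simpa using hB0⟩
    · exact ⟨hz, by simpa using hB0⟩
    · intro i; exact ⟨hz, by simpa using hB0⟩
    · intro i
      by_cases h : i.val < N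
      · rw [if_pos h]
        refine ⟨h10, ?_⟩
        show |1 - (((i.val+1)*N : ℕ) : ℝ)| ≤ B
        exact (nat_bias_bound B _ (hbias i h) hB1).1
      · rw [if_neg h]; exact ⟨hz, by simpa using hB0⟩
    · intro i
      by_cases h : i.val < N
      · rw [if_pos h]
        refine ⟨h10, ?_⟩
        show |(-((((i.val+1)*N : ℕ)) : ℝ))| ≤ B
        exact (nat_bias_bound B _ (hbias i h) hB1).2
      · rw [if_neg h]; exact ⟨hz, by simpa using hB0⟩
    · exact ⟨hz, by simpa using hB0⟩
    · exact ⟨hz, by simpa using hB0⟩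
    · intro i; exact ⟨hz, by simpa using hB0⟩
  exact ⟨fun i j => (key i).1 j, fun i => (key i).2⟩

lemma Aout_bound (N L : ℕ) (hN : 1 ≤ N) (hL : 1 ≤ L) :
    ∀ i, |AoutV N i| ≤ 12*(N:ℝ)^2*L := by
  intro i
  have hNR : (1:ℝ) ≤ N := by exact_mod_cast hN
  have hLR : (1:ℝ) ≤ L := by exact_mod_cast hL
  refine abs_rowOn_le _ _ _ ?_ i
  simp only [Fin.sum_univ_one, abs_one]
  nlinarith

lemma length_flat3 {α : Type*} (g1 g2 g3 : ℕ → α) (n : ℕ) :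
    (((List.range n).map (fun k => [g1 k, g2 k, g3 k])).flatten).length = 3*n := by
  induction n with
  | zero => simp
  | succ n ih =>
    rw [List.range_succ, List.map_append, List.flatten_append, List.length_append, ih]
    simp
    omega

lemma hiddenL_length (N L : ℕ) (θ : ℕ → ℕ → ℝ) :
    (hiddenL N L θ).length = (L-1) + 4 + 3*(L*L) := by
  unfold hiddenL
  rw [List.length_append, List.length_append, List.length_map, List.length_range,
    length_flat3]
  simp

end BitX


/-- Modified bit-extraction: for all `N, L ≥ 1` and bits
`θ_{m,l} ∈ {0,1}` (`0 ≤ m ≤ N²L - 1`, `0 ≤ l ≤ L - 1`) there is a ReLU network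
`φ : ℝ² → ℝ` of width at most `C·N` and depth at most `C·L²` with
`φ(m, l) = ∑_{j≤l} θ_{m,j}`, whose parameters are bounded by `C·N²L`,
for a universal constant `C > 0`. -/
theorem bit_extraction_polynomial_parameters :
    ∃ C : ℝ, 0 < C ∧
      ∀ N L : ℕ, 1 ≤ N → 1 ≤ L →
        ∀ θ : ℕ → ℕ → ℝ, (∀ m l, θ m l = 0 ∨ θ m l = 1) →
          ∃ φ : (Fin 2 → ℝ) → ℝ,
            IsReluNet φ (C * (N : ℝ)) (C * (L : ℝ) ^ 2) (C * (N : ℝ) ^ 2 * (L : ℝ)) ∧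
            ∀ m l : ℕ, m ≤ N ^ 2 * L - 1 → l ≤ L - 1 →
              φ ![(m : ℝ), (l : ℝ)] = ∑ j ∈ Finset.range (l + 1), θ m j := by

  refine ⟨12, by norm_num, ?_⟩
  intro N L hN hL θ hθ
  have hNR : (1:ℝ) ≤ N := by exact_mod_cast hN
  have hLR : (1:ℝ) ≤ L := by exact_mod_cast hL
  refine ⟨fun x => netEval (BitX.A0 N) (BitX.b0 N) (BitX.hiddenL N L θ) (BitX.AoutV N) 0 x,
    ?_, ?_⟩
  · refine ⟨BitX.Wd N, BitX.A0 N, BitX.b0 N, BitX.hiddenL N L θ, BitX.AoutV N, 0,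
      ?_, ?_, ?_, ?_, ?_, ?_, ?_, ?_⟩
    · have h1 : (BitX.Wd N : ℝ) = 4*(N:ℝ)+8 := by rw [BitX.Wd]; push_cast; ring
      rw [h1]
      nlinarith
    · have hlen : ((BitX.hiddenL N L θ).length : ℝ) = ((L-1 : ℕ) : ℝ) + 4 + 3*((L:ℝ)*L) := by
        rw [BitX.hiddenL_length]
        push_cast
        ring
      rw [hlen]
      have hsub : ((L-1 : ℕ) : ℝ) ≤ (L:ℝ) := by
        exact_mod_cast Nat.sub_le L 1
      nlinarith [sq_nonneg ((L:ℝ))]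
    · exact (BitX.in_bounds N L hN hL).1
    · exact (BitX.in_bounds N L hN hL).2
    · exact BitX.hidden_bounds N L θ hN hL hθ
    · exact BitX.Aout_bound N L hN hL
    · rw [abs_zero]
      nlinarith
    · intro x
      rfl
  · intro m l hm hl
    have hpos : 0 < N^2*L := by positivity
    have hm' : m < N^2*L := lt_of_le_of_lt hm (Nat.sub_lt hpos one_pos)
    have hm'' : m < N*N*L := by
      have hNN : N^2 = N*N := by ring
      rwa [hNN] at hm'
    have hl' : l < L := lt_of_le_of_lt hl (Nat.sub_lt (by omega) one_pos)
    exact BitX.net_correct N L m l θ hN hL hm'' hl' hθ
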